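/- As formal power series, Σ_{k≥1} ( Σ_{p₁+p₂ = k-1} (2p₁+1)·Cat(p₁)·Cat(p₂) ) x^k = x·T³/(1 - x·T²). -/

import Mathlib

open PowerSeries

noncomputable def catalanSeries : PowerSeries ℚ :=
  PowerSeries.mk fun k => (catalan k : ℚ)

lemma catalanSeries_eq : _root_.catalanSeries = 1 + X * _root_.catalanSeries ^ 2 := by
  ext n
  cases n with
  | zero => simp [_root_.catalanSeries]
  | succ n =>
    rw [map_add, coeff_succ_X_mul, sq, coeff_mul]
    simp [_root_.catalanSeries, catalan_succ' n, Nat.cast_sum]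

lemma sum_eq (n : ℕ) :
    (∑ p ∈ Finset.HasAntidiagonal.antidiagonal n,
      ((2 * p.1 + 1 : ℕ) : ℚ) * (catalan p.1 : ℚ) * (catalan p.2 : ℚ))
      = (n + 1) * catalan (n + 1) := by
  have hswap : (∑ p ∈ Finset.HasAntidiagonal.antidiagonal n,
      ((2 * p.1 + 1 : ℕ) : ℚ) * (catalan p.1 : ℚ) * (catalan p.2 : ℚ))
      = ∑ p ∈ Finset.HasAntidiagonal.antidiagonal n,
      ((2 * p.2 + 1 : ℕ) : ℚ) * (catalan p.2 : ℚ) * (catalan p.1 : ℚ) := by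
    conv_lhs => rw [← Finset.HasAntidiagonal.map_swap_antidiagonal]
    rw [Finset.sum_map]
    rfl
  have hcat : (∑ p ∈ Finset.HasAntidiagonal.antidiagonal n, (catalan p.1 : ℚ) * (catalan p.2 : ℚ))
      = catalan (n + 1) := by
    rw [catalan_succ' n]; push_cast; ring_nf
  have h2 : (∑ p ∈ Finset.HasAntidiagonal.antidiagonal n,
      ((2 * p.1 + 1 : ℕ) : ℚ) * (catalan p.1 : ℚ) * (catalan p.2 : ℚ)) * 2
      = (2 * n + 2) * catalan (n + 1) := by
    conv_lhs => rw [mul_two]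
    nth_rewrite 2 [hswap]
    rw [← hcat, ← Finset.sum_add_distrib, Finset.mul_sum]
    apply Finset.sum_congr rfl
    intro p hp
    have := Finset.HasAntidiagonal.mem_antidiagonal.mp hp
    have : (p.1 : ℚ) + p.2 = n := by exact_mod_cast congrArg Nat.cast this
    push_cast
    linear_combination (2 * (catalan p.1 : ℚ) * (catalan p.2 : ℚ)) * this
  linarith [h2]

lemma lhs_eq : (PowerSeries.mk fun k =>
        if k < 1 then (0 : ℚ)
        else ∑ p ∈ Finset.HasAntidiagonal.antidiagonal (k - 1),
          ((2 * p.1 + 1 : ℕ) : ℚ) * (catalan p.1 : ℚ) * (catalan p.2 : ℚ))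
      = X * (d⁄dX ℚ _root_.catalanSeries) := by
  ext n
  cases n with
  | zero => simp
  | succ n =>
    rw [coeff_succ_X_mul, coeff_derivative, coeff_mk]
    simp only [Nat.succ_sub_one, Nat.not_lt_zero, if_neg (by omega : ¬ n + 1 < 1)]
    rw [sum_eq n]
    simp [_root_.catalanSeries]
    ring

theorem self_loop_series :
    (PowerSeries.mk fun k =>
        if k < 1 then (0 : ℚ)
        else ∑ p ∈ Finset.HasAntidiagonal.antidiagonal (k - 1),
          ((2 * p.1 + 1 : ℕ) : ℚ) * (catalan p.1 : ℚ) * (catalan p.2 : ℚ)) *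
      (1 - PowerSeries.X * _root_.catalanSeries ^ 2) =
      PowerSeries.X * _root_.catalanSeries ^ 3 := by
  rw [lhs_eq]
  set T := _root_.catalanSeries
  have hT : T = 1 + X * T ^ 2 := catalanSeries_eq
  have hTd : d⁄dX ℚ T = T ^ 2 + 2 * X * T * d⁄dX ℚ T := by
    nth_rewrite 1 [hT]
    rw [map_add, Derivation.leibniz]
    simp [Derivation.leibniz, sq]
    ring
  linear_combination (-(X * d⁄dX ℚ T)) * hT + (X * T) * hTd
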